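/- Let (X,d) be a complete metric space, T[g] : X → [0,∞], and {z_n} a sequence in X with no converging subsequence such that ∑_n T[g](z_n)·d(z_n, z_{n+1}) < +∞. Then liminf_{n→∞} T[g](z_n) = 0. -/

import Mathlib

open Filter
open scoped ENNReal

/-- In a complete metric space, a sequence with no convergent
subsequence satisfying the summability condition has `liminf T (z n) = 0`. -/
theorem stmt1 {X : Type*} [MetricSpace X] [CompleteSpace X] (T : X → ℝ≥0∞) (z : ℕ → X)
    (hnoconv : ¬ ∃ (φ : ℕ → ℕ) (x : X), StrictMono φ ∧ Tendsto (z ∘ φ) atTop (nhds x))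
    (hsum : ∑' n, T (z n) * ENNReal.ofReal (dist (z n) (z (n + 1))) ≠ ⊤) :
    liminf (fun n => T (z n)) atTop = 0 := by
  by_contra h
  have hpos : 0 < liminf (fun n => T (z n)) atTop := zero_lt_iff.mpr h
  obtain ⟨ε, hε0, hεl⟩ := exists_between hpos
  have hεtop : ε ≠ ⊤ := hεl.ne_top
  have hev : ∀ᶠ n in atTop, ε < T (z n) := eventually_lt_of_lt_liminf hεl
  obtain ⟨N, hN⟩ := eventually_atTop.mp hev
  set d : ℕ → ℝ≥0∞ := fun n => ε⁻¹ * (T (z (n + N)) * ENNReal.ofReal (dist (z (n + N)) (z (n + N + 1))))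
  have hdtop : ∑' n, d n ≠ ⊤ := by
    have h1 : ∑' n, d n = ε⁻¹ * ∑' n, (T (z (n + N)) * ENNReal.ofReal (dist (z (n + N)) (z (n + N + 1)))) :=
      ENNReal.tsum_mul_left
    have h2 : ∑' n, (T (z (n + N)) * ENNReal.ofReal (dist (z (n + N)) (z (n + N + 1))))
        ≤ ∑' n, T (z n) * ENNReal.ofReal (dist (z n) (z (n + 1))) := by
      exact ENNReal.tsum_comp_le_tsum_of_injective (fun a b hab => by simpa using hab) _
    rw [h1]
    exact ENNReal.mul_ne_top (ENNReal.inv_ne_top.mpr hε0.ne') (lt_of_le_of_lt h2 hsum.lt_top).ne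
  have hedist : ∀ n, edist (z (n + N)) (z (n.succ + N)) ≤ d n := by
    intro n
    rw [Nat.succ_add, edist_dist]
    have h1 : (1 : ℝ≥0∞) ≤ ε⁻¹ * T (z (n + N)) := by
      rw [← ENNReal.inv_mul_cancel hε0.ne' hεtop]
      exact mul_le_mul_right (hN (n + N) (Nat.le_add_left N n)).le _
    calc ENNReal.ofReal (dist (z (n + N)) (z (n + N + 1)))
        = 1 * ENNReal.ofReal (dist (z (n + N)) (z (n + N + 1))) := (one_mul _).symm
      _ ≤ (ε⁻¹ * T (z (n + N))) * ENNReal.ofReal (dist (z (n + N)) (z (n + N + 1))) :=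
          mul_le_mul_left h1 _
      _ = d n := by simp [d, mul_assoc]
  have hcauchy : CauchySeq (fun n => z (n + N)) :=
    cauchySeq_of_edist_le_of_tsum_ne_top d hedist hdtop
  obtain ⟨x, hx⟩ := cauchySeq_tendsto_of_complete hcauchy
  exact hnoconv ⟨fun n => n + N, x, fun a b hab => Nat.add_lt_add_right hab N, hx⟩
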